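/- Let m ≡ 1 (mod 8) with m ≥ 9, n = 2^m − 1, and v = 2^{(m+1)/2} − 1. Then gcd(v, n) = 1, and for every integer a with 1 ≤ a ≤ 2^{(m−1)/2} + 2, the binary weight of (a·v mod n) is congruent to 1 or 2 modulo 4. -/

import Mathlib

def w2 (x : ℕ) : ℕ := (Nat.digits 2 x).sum

lemma w2_step (x : ℕ) : w2 x = w2 (x / 2) + x % 2 := by
  rcases Nat.eq_zero_or_pos x with h | h
  · simp [h, w2]
  · unfold w2
    rw [Nat.digits_def' (by norm_num : 1 < 2) h]
    simp [Nat.add_comm]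

lemma w2_compl : ∀ k x : ℕ, x < 2 ^ k → w2 x + w2 (2 ^ k - 1 - x) = k := by
  intro k
  induction k with
  | zero => intro x hx; interval_cases x; simp [w2]
  | succ k ih =>
    intro x hx
    have hx2 : x / 2 < 2 ^ k := by omega
    have key : 2 ^ (k + 1) - 1 - x = 2 * (2 ^ k - 1 - x / 2) + (1 - x % 2) := by
      have h1 : x % 2 < 2 := Nat.mod_lt _ (by norm_num)
      have h2 : x = 2 * (x / 2) + x % 2 := (Nat.div_add_mod x 2).symm ▸ by omega
      have h3 : (2:ℕ) ^ (k+1) = 2 * 2 ^ k := by ring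
      omega
    rw [w2_step x, key, w2_step (2 * (2 ^ k - 1 - x / 2) + (1 - x % 2))]
    have e1 : (2 * (2 ^ k - 1 - x / 2) + (1 - x % 2)) / 2 = 2 ^ k - 1 - x / 2 := by omega
    have e2 : (2 * (2 ^ k - 1 - x / 2) + (1 - x % 2)) % 2 = 1 - x % 2 := by omega
    rw [e1, e2]
    have := ih (x / 2) hx2
    omega

lemma w2_mul_pow_add : ∀ (k y x : ℕ), x < 2 ^ k → w2 (y * 2 ^ k + x) = w2 y + w2 x := by
  intro k
  induction k with
  | zero => intro y x hx; interval_cases x; simp [w2]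
  | succ k ih =>
    intro y x hx
    have hx2 : x / 2 < 2 ^ k := by omega
    have key : y * 2 ^ (k + 1) + x = 2 * (y * 2 ^ k + x / 2) + x % 2 := by
      have h2 : x = 2 * (x / 2) + x % 2 := (Nat.div_add_mod x 2).symm ▸ by omega
      have h3 : (2:ℕ) ^ (k+1) = 2 * 2 ^ k := by ring
      nlinarith [h2, h3]
    rw [w2_step (y * 2 ^ (k+1) + x), key]
    have e1 : (2 * (y * 2 ^ k + x / 2) + x % 2) / 2 = y * 2 ^ k + x / 2 := by omega
    have e2 : (2 * (y * 2 ^ k + x / 2) + x % 2) % 2 = x % 2 := by omega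
    rw [e1, e2, ih y (x / 2) hx2, w2_step x]
    omega

lemma w2_pow_sub_one (k : ℕ) : w2 (2 ^ k - 1) = k := by
  have := w2_compl k 0 (Nat.two_pow_pos k)
  simpa [w2] using this

theorem stmt17 (m : ℕ) (hm : m % 8 = 1) (hm9 : 9 ≤ m)
    (n v : ℕ) (hn : n = 2 ^ m - 1) (hv : v = 2 ^ ((m + 1) / 2) - 1) :
    Nat.gcd v n = 1 ∧
    ∀ a : ℕ, 1 ≤ a → a ≤ 2 ^ ((m - 1) / 2) + 2 →
      w2 (a * v % n) % 4 = 1 ∨ w2 (a * v % n) % 4 = 2 := by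
  obtain ⟨t, ht⟩ : ∃ t, m = 8 * t + 1 := ⟨m / 8, by omega⟩
  have ht1 : 1 ≤ t := by omega
  set k : ℕ := 4 * t + 1 with hk
  have hk1 : (m + 1) / 2 = k := by omega
  have hk2 : (m - 1) / 2 = k - 1 := by omega
  have hm2k : m = 2 * k - 1 := by omega
  have hk5 : 5 ≤ k := by omega
  have hpowk : (2:ℕ) ^ k ≥ 2 ^ 5 := Nat.pow_le_pow_right (by norm_num) hk5
  have hvk : v = 2 ^ k - 1 := by rw [hv, hk1]
  have hnk : n = 2 ^ (2 * k - 1) - 1 := by rw [hn, hm2k]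
  -- gcd part
  have hgcd : Nat.gcd v n = 1 := by
    have hd1 : Nat.gcd v n ∣ 2 ^ (2 * k) - 1 := by
      have : (2:ℕ) ^ (2 * k) - 1 = (2 ^ k - 1) * (2 ^ k + 1) := by
        obtain ⟨q, hq⟩ : ∃ q, (2:ℕ) ^ k = q + 1 := ⟨2 ^ k - 1, by omega⟩
        have h2 : (2:ℕ) ^ (2 * k) = 2 ^ k * 2 ^ k := by rw [two_mul, pow_add]
        rw [h2, hq]
        have h4 : (q + 1) * (q + 1) = q * (q + 2) + 1 := by ring
        have h5 : q * (q + 1 + 1) = q * (q + 2) := by ring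
        simp only [Nat.add_sub_cancel]
        omega
      rw [this, ← hvk]
      exact Dvd.dvd.mul_right (Nat.gcd_dvd_left v n) _
    have hd2 : Nat.gcd v n ∣ 2 ^ (2 * k) - 2 := by
      have h2 : (2:ℕ) ^ (2 * k) - 2 = 2 * (2 ^ (2 * k - 1) - 1) := by
        have h3 : 2 * k = (2 * k - 1) + 1 := by omega
        have : (2:ℕ) ^ (2 * k) = 2 ^ (2 * k - 1) * 2 := by conv_lhs => rw [h3, pow_succ]
        omega
      rw [h2, ← hnk]
      exact Dvd.dvd.mul_left (Nat.gcd_dvd_right v n) _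
    have := Nat.dvd_sub hd1 hd2
    have hsub : (2:ℕ) ^ (2 * k) - 1 - (2 ^ (2 * k) - 2) = 1 := by
      have : (2:ℕ) ≤ 2 ^ (2 * k) := by
        calc (2:ℕ) ≤ 2 ^ 5 := by norm_num
        _ ≤ 2 ^ (2*k) := Nat.pow_le_pow_right (by norm_num) (by omega)
      omega
    rw [hsub] at this
    exact Nat.dvd_one.mp this
  refine ⟨hgcd, ?_⟩
  intro a ha1 ha2
  rw [hk2] at ha2
  set P : ℕ := 2 ^ (k - 1) with hP
  have hP2 : 2 ^ k = 2 * P := by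
    conv_lhs => rw [show k = (k - 1) + 1 from by omega, pow_succ]
    rw [hP]; ring
  have hPk : P * 2 ^ k = 2 ^ (2 * k - 1) := by
    rw [hP, ← pow_add]; congr 1; omega
  have h1k : (1:ℕ) ≤ 2 ^ k := Nat.one_le_two_pow
  have hn1 : n + 1 = 2 ^ (2 * k - 1) := by
    rw [hnk]
    have : (1:ℕ) ≤ 2 ^ (2 * k - 1) := Nat.one_le_two_pow
    omega
  have hkP : 2 ^ k ≤ 2 ^ (2 * k - 1) := Nat.pow_le_pow_right (by norm_num) (by omega)
  have hP16 : 16 ≤ P := by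
    calc (16:ℕ) = 2 ^ 4 := by norm_num
    _ ≤ 2 ^ (k - 1) := Nat.pow_le_pow_right (by norm_num) (by omega)
  have hw1 : w2 1 = 1 := by simp [w2]
  have hbig : 3 * P + 2 ≤ 2 ^ (2 * k - 1) := by
    have h32 : P * 32 ≤ P * 2 ^ k := Nat.mul_le_mul_left P hpowk
    omega
  rcases Nat.lt_or_ge a (P + 1) with hcase | hcase
  · -- 1 ≤ a ≤ P : weight is k
    have haP : a ≤ P := by omega
    have ha2k : a ≤ 2 ^ k := by omega
    have e1 : a * v + a = a * 2 ^ k := by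
      rw [hvk]
      calc a * (2 ^ k - 1) + a = a * ((2 ^ k - 1) + 1) := by ring
      _ = a * 2 ^ k := by rw [Nat.sub_add_cancel h1k]
    have e2 : (a - 1) * 2 ^ k + 2 ^ k = a * 2 ^ k := by
      have : (a - 1 + 1) * 2 ^ k = (a - 1) * 2 ^ k + 2 ^ k := by ring
      rw [show a - 1 + 1 = a by omega] at this
      omega
    have e3 : a * v = (a - 1) * 2 ^ k + (2 ^ k - a) := by omega
    have hlt : a * v < n := by
      have h4 : a * v ≤ P * v := Nat.mul_le_mul_right v haP
      have h5 : P * v + P = 2 ^ (2 * k - 1) := by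
        rw [hvk]
        calc P * (2 ^ k - 1) + P = P * ((2 ^ k - 1) + 1) := by ring
        _ = P * 2 ^ k := by rw [Nat.sub_add_cancel h1k]
        _ = 2 ^ (2 * k - 1) := hPk
      omega
    rw [Nat.mod_eq_of_lt hlt, e3,
      w2_mul_pow_add k (a - 1) (2 ^ k - a) (by omega)]
    have hc := w2_compl k (a - 1) (by omega)
    rw [show 2 ^ k - 1 - (a - 1) = 2 ^ k - a by omega] at hc
    left
    omega
  · -- a = P + 1 or a = P + 2
    have e1 : a * v + a = a * 2 ^ k := by
      rw [hvk]
      calc a * (2 ^ k - 1) + a = a * ((2 ^ k - 1) + 1) := by ring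
      _ = a * 2 ^ k := by rw [Nat.sub_add_cancel h1k]
    rcases Nat.lt_or_ge a (P + 2) with hc2 | hc2
    · -- a = P + 1
      have ha : a = P + 1 := by omega
      subst ha
      have e2 : (P + 1) * 2 ^ k = P * 2 ^ k + 2 ^ k := by ring
      have e3 : (P + 1) * v = n + P := by omega
      have hPn : P < n := by omega
      rw [e3, Nat.add_mod_left, Nat.mod_eq_of_lt hPn]
      left
      have : w2 P = 1 := by
        have := w2_mul_pow_add (k - 1) 1 0 (Nat.one_le_two_pow)
        simpa [w2, hP] using this
      rw [this]
    · -- a = P + 2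
      have ha : a = P + 2 := by omega
      subst ha
      have e2 : (P + 2) * 2 ^ k = P * 2 ^ k + 2 * 2 ^ k := by ring
      have e3 : (P + 2) * v = n + (2 ^ k + (P - 1)) := by omega
      have hxn : 2 ^ k + (P - 1) < n := by omega
      rw [e3, Nat.add_mod_left, Nat.mod_eq_of_lt hxn]
      have e4 : 2 ^ k + (P - 1) = 1 * 2 ^ k + (2 ^ (k - 1) - 1) := by
        rw [← hP]; omega
      rw [e4, w2_mul_pow_add k 1 (2 ^ (k - 1) - 1) (by omega), hw1,
        w2_pow_sub_one (k - 1)]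
      left
      omega
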